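/- Let ε ≥ 0, 0 ≤ δ ≤ 1, and let p be a distribution on V. Every distribution p'' on V that is (ε,δ)-close to p is dominated by T_{ε,δ}(p), i.e., p'' ⪯ T_{ε,δ}(p). -/

import Mathlib

open Finset

/-- Prefix sum `s_k = p_1 + ⋯ + p_k` (0-indexed internally: sum of entries with index `< k`). -/
noncomputable def prefixSum (q : ℕ) (p : Fin q → ℝ) (k : ℕ) : ℝ :=
  ∑ i ∈ Finset.univ.filter (fun i : Fin q => (i : ℕ) < k), p i

/-- `p` is a probability distribution on `V = {1, …, q}`. -/
def IsDist (q : ℕ) (p : Fin q → ℝ) : Prop :=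
  (∀ k, 0 ≤ p k) ∧ ∑ k, p k = 1

/-- The modified prefix sums `s'_k` defining the operator `T_{ε,δ}`:
`s'_0 = 0` and `s'_k = min {1, min {e^ε s_k, 1 - e^{-ε} (1 - s_k)} + δ}` for `k ≥ 1`. -/
noncomputable def sPrime (ε δ : ℝ) (q : ℕ) (p : Fin q → ℝ) (k : ℕ) : ℝ :=
  if k = 0 then 0
  else min 1 (min (Real.exp ε * prefixSum q p k)
      (1 - Real.exp (-ε) * (1 - prefixSum q p k)) + δ)

/-- The operator `T_{ε,δ}`: `(T_{ε,δ} p)_k = s'_k - s'_{k-1}`. -/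
noncomputable def Tmap (ε δ : ℝ) (q : ℕ) (p : Fin q → ℝ) : Fin q → ℝ :=
  fun k => sPrime ε δ q p ((k : ℕ) + 1) - sPrime ε δ q p (k : ℕ)

/-- `P` and `Q` are `(ε,δ)`-close: for every `S ⊆ V`,
`P(S) ≤ e^ε Q(S) + δ` and `Q(S) ≤ e^ε P(S) + δ`. -/
def Close (ε δ : ℝ) (q : ℕ) (P Q : Fin q → ℝ) : Prop :=
  ∀ S : Finset (Fin q),
    (∑ k ∈ S, P k) ≤ Real.exp ε * (∑ k ∈ S, Q k) + δ ∧
    (∑ k ∈ S, Q k) ≤ Real.exp ε * (∑ k ∈ S, P k) + δ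

/-- Dominance ordering: `x ⪯ y` iff every prefix sum of `x` is at most that of `y`. -/
def Dom (q : ℕ) (x y : Fin q → ℝ) : Prop :=
  ∀ k : ℕ, k ≤ q → prefixSum q x k ≤ prefixSum q y k


lemma prefixSum_succ' (q : ℕ) (x : Fin q → ℝ) (k : ℕ) (hk : k < q) :
    prefixSum q x (k+1) = prefixSum q x k + x ⟨k, hk⟩ := by
  unfold prefixSum
  have h : (Finset.univ.filter (fun i : Fin q => (i : ℕ) < k + 1))
      = insert ⟨k, hk⟩ (Finset.univ.filter (fun i : Fin q => (i : ℕ) < k)) := by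
    ext i
    simp [Nat.lt_succ_iff_lt_or_eq, Fin.ext_iff, or_comm]
    omega
  rw [h, Finset.sum_insert (by simp)]
  ring

lemma prefixSum_Tmap' (ε δ : ℝ) (q : ℕ) (p : Fin q → ℝ) (k : ℕ) (hk : k ≤ q) :
    prefixSum q (Tmap ε δ q p) k = sPrime ε δ q p k := by
  induction k with
  | zero => simp [prefixSum, sPrime]
  | succ m ih =>
    have hm : m < q := hk
    rw [prefixSum_succ' q _ m hm, ih (le_of_lt hm)]
    simp [Tmap]

/-- Every distribution `p''` that is `(ε,δ)`-close to `p` is dominated by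
`T_{ε,δ}(p)`. -/
theorem dominated_by_Tmap (q : ℕ) (hq : 1 ≤ q) (ε δ : ℝ) (hε : 0 ≤ ε) (hδ0 : 0 ≤ δ)
    (hδ1 : δ ≤ 1) (p : Fin q → ℝ) (hp : IsDist q p)
    (p'' : Fin q → ℝ) (hp'' : IsDist q p'') (hclose : Close ε δ q p'' p) :
    Dom q p'' (Tmap ε δ q p) := by
  intro k hk
  rw [prefixSum_Tmap' ε δ q p k hk]
  rcases Nat.eq_zero_or_pos k with h0 | hpos
  · simp [h0, prefixSum, sPrime]
  have hkne : k ≠ 0 := Nat.pos_iff_ne_zero.mp hpos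
  set S := Finset.univ.filter (fun i : Fin q => (i : ℕ) < k) with hS
  have hsum'' : prefixSum q p'' k = ∑ i ∈ S, p'' i := rfl
  have hsum : prefixSum q p k = ∑ i ∈ S, p i := rfl
  have hcompl'' : (∑ i ∈ S, p'' i) + ∑ i ∈ Sᶜ, p'' i = 1 := by
    rw [Finset.sum_add_sum_compl]; exact hp''.2
  have hcompl : (∑ i ∈ S, p i) + ∑ i ∈ Sᶜ, p i = 1 := by
    rw [Finset.sum_add_sum_compl]; exact hp.2
  have hle1 : prefixSum q p'' k ≤ 1 := by
    rw [hsum'', ← hp''.2]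
    exact Finset.sum_le_sum_of_subset_of_nonneg (Finset.subset_univ S)
      (fun i _ _ => hp''.1 i)
  have h1 := (hclose S).1
  have h2 := (hclose Sᶜ).2
  have hEpos : (0:ℝ) < Real.exp (-ε) := Real.exp_pos _
  have hEle : Real.exp (-ε) ≤ 1 := Real.exp_le_one_iff.mpr (by linarith)
  have hEE : Real.exp (-ε) * Real.exp ε = 1 := by
    rw [← Real.exp_add]; simp
  unfold sPrime
  rw [if_neg hkne]
  refine le_min hle1 ?_
  rw [← min_add_add_right]
  refine le_min ?_ ?_
  · rw [hsum'', hsum]; linarith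
  · rw [hsum'']
    have h3 : Real.exp (-ε) * (∑ i ∈ Sᶜ, p i) ≤
        Real.exp (-ε) * (Real.exp ε * (∑ i ∈ Sᶜ, p'' i) + δ) :=
      mul_le_mul_of_nonneg_left h2 (le_of_lt hEpos)
    rw [hsum]
    nlinarith [mul_le_mul_of_nonneg_right hEle hδ0]
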